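/- arXiv:2105.09797 — 6 statements merged into one kernel-verified Lean document; each statement's English description precedes it below -/
import Mathlib

section
/- For all finite graphs G and H, γ(G ⊠ H) ≤ γ(G)·γ(H) and Γ(G ⊠ H) ≥ Γ(G)·Γ(H), where ⊠ denotes the strong product. -/
open SimpleGraph

variable {V : Type*}

/-- Closed neighborhood of a vertex. -/
def closedNbhd (G : SimpleGraph V) (v : V) : Set V := insert v (G.neighborSet v)

/-- Closed neighborhood of a set of vertices. -/
def closedNbhdSet (G : SimpleGraph V) (A : Set V) : Set V := ⋃ a ∈ A, closedNbhd G a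

/-- `D` is a dominating set of `G`. -/
def IsDomSet (G : SimpleGraph V) (D : Set V) : Prop :=
  ∀ v, ∃ u ∈ D, v ∈ closedNbhd G u

/-- `D` is a minimal dominating set of `G`. -/
def IsMinimalDomSet (G : SimpleGraph V) (D : Set V) : Prop :=
  IsDomSet G D ∧ ∀ D' ⊆ D, IsDomSet G D' → D' = D

/-- The domination number `γ`. -/
noncomputable def domNum (G : SimpleGraph V) : ℕ :=
  sInf {n | ∃ D : Set V, IsDomSet G D ∧ D.ncard = n}

/-- The upper domination number `Γ`. -/
noncomputable def upperDomNum (G : SimpleGraph V) : ℕ :=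
  sSup {n | ∃ D : Set V, IsMinimalDomSet G D ∧ D.ncard = n}

/-- A graph is well-dominated if `γ = Γ`. -/
def WellDominated (G : SimpleGraph V) : Prop := domNum G = upperDomNum G

/-- `A` is an independent set of `G`. -/
def IsIndep (G : SimpleGraph V) (A : Set V) : Prop :=
  ∀ u ∈ A, ∀ v ∈ A, ¬ G.Adj u v

/-- `A` is a maximal independent set of `G`. -/
def IsMaxIndep (G : SimpleGraph V) (A : Set V) : Prop :=
  IsIndep G A ∧ ∀ B, IsIndep G B → A ⊆ B → B = A

/-- The independence number `α`. -/
noncomputable def indepNum (G : SimpleGraph V) : ℕ :=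
  sSup {n | ∃ A : Set V, IsIndep G A ∧ A.ncard = n}

/-- The strong product of two graphs. -/
def strongProd {α β : Type*} (G : SimpleGraph α) (H : SimpleGraph β) :
    SimpleGraph (α × β) where
  Adj x y := x ≠ y ∧ (x.1 = y.1 ∨ G.Adj x.1 y.1) ∧ (x.2 = y.2 ∨ H.Adj x.2 y.2)
  symm := by
    constructor
    rintro x y ⟨h1, h2, h3⟩
    refine ⟨h1.symm, ?_, ?_⟩
    · cases h2 with
      | inl h => exact Or.inl h.symm
      | inr h => exact Or.inr h.symm
    · cases h3 with
      | inl h => exact Or.inl h.symm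
      | inr h => exact Or.inr h.symm
  loopless := by constructor; rintro x ⟨h1, _⟩; exact h1 rfl

/-- The direct (tensor) product of two graphs. -/
def tensorProd {α β : Type*} (G : SimpleGraph α) (H : SimpleGraph β) :
    SimpleGraph (α × β) where
  Adj x y := G.Adj x.1 y.1 ∧ H.Adj x.2 y.2
  symm := ⟨fun _ _ h => ⟨h.1.symm, h.2.symm⟩⟩
  loopless := ⟨fun _ h => G.irrefl h.1⟩

/-- The corona `G ⊙ K₁`. -/
def corona {α : Type*} (G : SimpleGraph α) : SimpleGraph (α ⊕ α) :=
  SimpleGraph.fromRel (fun x y =>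
    match x, y with
    | Sum.inl u, Sum.inl v => G.Adj u v
    | Sum.inl u, Sum.inr v => u = v
    | _, _ => False)

/-- The private neighborhood `pn[u,D] = N[u] - N[D - {u}]`. -/
def privateNbhd (G : SimpleGraph V) (D : Set V) (u : V) : Set V :=
  {x | x ∈ closedNbhd G u ∧ ∀ d ∈ D, d ≠ u → x ∉ closedNbhd G d}

/-- A set `D` is open irredundant if every vertex of `D` has an external
private neighbor. -/
def IsOpenIrred (G : SimpleGraph V) (D : Set V) : Prop :=
  ∀ u ∈ D, ∃ x ∈ G.neighborSet u, ∀ d ∈ D, d ≠ u → x ∉ closedNbhd G d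

/- ---------- auxiliary lemmas ---------- -/

lemma mem_closedNbhd {G : SimpleGraph V} {u x : V} :
    x ∈ closedNbhd G u ↔ x = u ∨ G.Adj u x := by
  simp [closedNbhd, SimpleGraph.neighborSet]

lemma isDomSet_univ (G : SimpleGraph V) : IsDomSet G Set.univ :=
  fun v => ⟨v, Set.mem_univ v, by simp [closedNbhd]⟩

lemma exists_domSet_card (G : SimpleGraph V) :
    ∃ D, IsDomSet G D ∧ D.ncard = domNum G :=
  Nat.sInf_mem (⟨Set.univ.ncard, Set.univ, isDomSet_univ G, rfl⟩ :
    {n | ∃ D : Set V, IsDomSet G D ∧ D.ncard = n}.Nonempty)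

lemma exists_minimalDomSet [Fintype V] (G : SimpleGraph V) :
    ∃ D, IsMinimalDomSet G D := by
  obtain ⟨D, hD, hcard⟩ := exists_domSet_card G
  refine ⟨D, hD, fun D' hsub hD' => ?_⟩
  have h1 : domNum G ≤ D'.ncard := Nat.sInf_le ⟨D', hD', rfl⟩
  exact Set.eq_of_subset_of_ncard_le hsub (hcard.le.trans h1) D.toFinite

lemma upperSet_bddAbove [Fintype V] (G : SimpleGraph V) :
    BddAbove {n | ∃ D : Set V, IsMinimalDomSet G D ∧ D.ncard = n} := by
  refine ⟨Fintype.card V, fun n hn => ?_⟩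
  obtain ⟨D, _, rfl⟩ := hn
  calc D.ncard ≤ (Set.univ : Set V).ncard :=
        Set.ncard_le_ncard (Set.subset_univ D) Set.finite_univ
    _ = Fintype.card V := by simp [Set.ncard_univ, Nat.card_eq_fintype_card]

lemma exists_upperDomSet_card [Fintype V] (G : SimpleGraph V) :
    ∃ D, IsMinimalDomSet G D ∧ D.ncard = upperDomNum G := by
  obtain ⟨D, hD⟩ := exists_minimalDomSet G
  exact Nat.sSup_mem (⟨D.ncard, D, hD, rfl⟩ :
    {n | ∃ D : Set V, IsMinimalDomSet G D ∧ D.ncard = n}.Nonempty) (upperSet_bddAbove G)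

lemma minimal_private {G : SimpleGraph V} {D : Set V} (hD : IsMinimalDomSet G D)
    {u : V} (hu : u ∈ D) :
    ∃ x ∈ closedNbhd G u, ∀ d ∈ D, d ≠ u → x ∉ closedNbhd G d := by
  have hne : ¬ IsDomSet G (D \ {u}) := by
    intro h
    have := hD.2 _ Set.diff_subset h
    rw [← this] at hu
    exact hu.2 rfl
  simp only [IsDomSet, not_forall, not_exists] at hne
  obtain ⟨x, hx⟩ := hne
  obtain ⟨d, hd, hxd⟩ := hD.1 x
  have hdu : d = u := by
    by_contra h
    exact (hx d) ⟨⟨hd, h⟩, hxd⟩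
  subst hdu
  refine ⟨x, hxd, fun d hdD hdne hxd' => (hx d) ⟨⟨hdD, hdne⟩, hxd'⟩⟩

lemma domSet_prod {α β : Type*} {G : SimpleGraph α} {H : SimpleGraph β}
    {D₁ : Set α} {D₂ : Set β} (h₁ : IsDomSet G D₁) (h₂ : IsDomSet H D₂) :
    IsDomSet (strongProd G H) (D₁ ×ˢ D₂) := by
  rintro ⟨a, b⟩
  obtain ⟨u, hu, hau⟩ := h₁ a
  obtain ⟨v, hv, hbv⟩ := h₂ b
  refine ⟨(u, v), ⟨hu, hv⟩, ?_⟩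
  rw [mem_closedNbhd] at hau hbv ⊢
  rcases hau with rfl | hau
  · rcases hbv with rfl | hbv
    · exact Or.inl rfl
    · exact Or.inr ⟨by simp [Prod.ext_iff, hbv.ne], Or.inl rfl, Or.inr hbv⟩
  · rcases hbv with rfl | hbv
    · exact Or.inr ⟨by simp [Prod.ext_iff, hau.ne], Or.inr hau, Or.inl rfl⟩
    · exact Or.inr ⟨by simp [Prod.ext_iff, hau.ne], Or.inr hau, Or.inr hbv⟩

lemma minimalDomSet_prod {α β : Type*} {G : SimpleGraph α} {H : SimpleGraph β}
    {D₁ : Set α} {D₂ : Set β}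
    (h₁ : IsMinimalDomSet G D₁) (h₂ : IsMinimalDomSet H D₂) :
    IsMinimalDomSet (strongProd G H) (D₁ ×ˢ D₂) := by
  refine ⟨domSet_prod h₁.1 h₂.1, fun D' hsub hD' => ?_⟩
  refine Set.Subset.antisymm hsub fun ⟨u, v⟩ huv => ?_
  obtain ⟨hu, hv⟩ := huv
  obtain ⟨x, hxu, hxpriv⟩ := minimal_private h₁ hu
  obtain ⟨y, hyv, hypriv⟩ := minimal_private h₂ hv
  obtain ⟨⟨u', v'⟩, hD'uv, hdom⟩ := hD' (x, y)
  obtain ⟨hu', hv'⟩ := hsub hD'uv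
  rw [mem_closedNbhd] at hdom
  have hxu' : x ∈ closedNbhd G u' := by
    rw [mem_closedNbhd]
    rcases hdom with h | ⟨_, h, _⟩
    · exact Or.inl (congrArg Prod.fst h)
    · rcases h with h | h
      · exact Or.inl h.symm
      · exact Or.inr h
  have hyv' : y ∈ closedNbhd H v' := by
    rw [mem_closedNbhd]
    rcases hdom with h | ⟨_, _, h⟩
    · exact Or.inl (congrArg Prod.snd h)
    · rcases h with h | h
      · exact Or.inl h.symm
      · exact Or.inr h
  have hu'u : u' = u := by
    by_contra h
    exact hxpriv u' hu' h hxu'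
  have hv'v : v' = v := by
    by_contra h
    exact hypriv v' hv' h hyv'
  rw [hu'u, hv'v] at hD'uv
  exact hD'uv

lemma ncard_sprod {α β : Type*} (s : Set α) (t : Set β) :
    (s ×ˢ t).ncard = s.ncard * t.ncard := by
  rw [← Nat.card_coe_set_eq, ← Nat.card_coe_set_eq, ← Nat.card_coe_set_eq,
    ← Nat.card_prod]
  exact Nat.card_congr (Equiv.Set.prod s t)

/-- For finite graphs, `γ(G ⊠ H) ≤ γ(G)γ(H)` and `Γ(G ⊠ H) ≥ Γ(G)Γ(H)`. -/
theorem stmt_1 {α β : Type*} [Fintype α] [Fintype β]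
    (G : SimpleGraph α) (H : SimpleGraph β) :
    domNum (strongProd G H) ≤ domNum G * domNum H ∧
    upperDomNum G * upperDomNum H ≤ upperDomNum (strongProd G H) := by
  constructor
  · obtain ⟨D₁, hD₁, hc₁⟩ := exists_domSet_card G
    obtain ⟨D₂, hD₂, hc₂⟩ := exists_domSet_card H
    have := Nat.sInf_le (s := {n | ∃ D : Set (α × β),
      IsDomSet (strongProd G H) D ∧ D.ncard = n})
      ⟨D₁ ×ˢ D₂, domSet_prod hD₁ hD₂, rfl⟩
    rwa [ncard_sprod, hc₁, hc₂] at this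
  · obtain ⟨D₁, hD₁, hc₁⟩ := exists_upperDomSet_card G
    obtain ⟨D₂, hD₂, hc₂⟩ := exists_upperDomSet_card H
    have := le_csSup (upperSet_bddAbove (strongProd G H))
      (a := (D₁ ×ˢ D₂).ncard)
      ⟨D₁ ×ˢ D₂, minimalDomSet_prod hD₁ hD₂, rfl⟩
    rwa [ncard_sprod, hc₁, hc₂] at this
end

section
/- For every positive integer n and every graph H, the strong product Kₙ ⊠ H is well-dominated if and only if H is well-dominated. -/
open SimpleGraph

variable {V : Type*}

section Aux

variable {β : Type*} {n : ℕ} {H : SimpleGraph β}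

lemma mem_closedNbhd_sp {u v : Fin n × β} :
    v ∈ closedNbhd (strongProd (⊤ : SimpleGraph (Fin n)) H) u ↔
      v.2 ∈ closedNbhd H u.2 := by
  constructor
  · rintro (rfl | ⟨hne, h1, h2⟩)
    · exact Set.mem_insert _ _
    · rcases h2 with h2 | h2
      · exact h2 ▸ Set.mem_insert _ _
      · exact Set.mem_insert_of_mem _ h2
  · rintro (h | h)
    · by_cases hv : v = u
      · exact Set.mem_insert_iff.2 (Or.inl hv)
      · refine Set.mem_insert_of_mem _ ⟨fun he => hv he.symm, ?_, Or.inl h.symm⟩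
        by_cases h1 : u.1 = v.1
        · exact Or.inl h1
        · exact Or.inr h1
    · refine Set.mem_insert_of_mem _ ⟨?_, ?_, Or.inr h⟩
      · intro he; exact H.loopless.irrefl _ (he ▸ h)
      · by_cases h1 : u.1 = v.1
        · exact Or.inl h1
        · exact Or.inr h1

lemma isDomSet_sp (hn : 0 < n) {D : Set (Fin n × β)} :
    IsDomSet (strongProd (⊤ : SimpleGraph (Fin n)) H) D ↔ IsDomSet H (Prod.snd '' D) := by
  constructor
  · intro hD v
    obtain ⟨u, hu, hmem⟩ := hD (⟨0, hn⟩, v)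
    exact ⟨u.2, ⟨u, hu, rfl⟩, mem_closedNbhd_sp.1 hmem⟩
  · intro hS v
    obtain ⟨b, ⟨u, hu, rfl⟩, hmem⟩ := hS v.2
    exact ⟨u, hu, mem_closedNbhd_sp.2 hmem⟩

lemma min_inj (hn : 0 < n) {D : Set (Fin n × β)}
    (hD : IsMinimalDomSet (strongProd (⊤ : SimpleGraph (Fin n)) H) D) :
    Set.InjOn Prod.snd D := by
  intro u hu v hv huv
  by_contra hne
  have hsub : D \ {u} ⊆ D := Set.diff_subset
  have hdom : IsDomSet (strongProd (⊤ : SimpleGraph (Fin n)) H) (D \ {u}) := by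
    rw [isDomSet_sp hn]
    have : Prod.snd '' (D \ {u}) = Prod.snd '' D := by
      apply Set.Subset.antisymm (Set.image_mono hsub)
      rintro b ⟨w, hw, rfl⟩
      by_cases hwu : w = u
      · exact ⟨v, ⟨hv, fun hv' => hne ((Set.mem_singleton_iff.1 hv') ▸ rfl)⟩,
          (hwu ▸ huv.symm : v.2 = w.2)⟩
      · exact ⟨w, ⟨hw, hwu⟩, rfl⟩
    rw [this]
    exact (isDomSet_sp hn).1 hD.1
  have := hD.2 _ hsub hdom
  have : u ∈ D \ {u} := this.symm ▸ hu
  exact this.2 rfl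

lemma min_sp_to_base (hn : 0 < n) {D : Set (Fin n × β)}
    (hD : IsMinimalDomSet (strongProd (⊤ : SimpleGraph (Fin n)) H) D) :
    IsMinimalDomSet H (Prod.snd '' D) := by
  refine ⟨(isDomSet_sp hn).1 hD.1, ?_⟩
  intro S' hS' hdom'
  set D' : Set (Fin n × β) := {u ∈ D | u.2 ∈ S'} with hD'def
  have hsub : D' ⊆ D := fun u hu => hu.1
  have himg : Prod.snd '' D' = S' := by
    apply Set.Subset.antisymm
    · rintro b ⟨u, hu, rfl⟩; exact hu.2
    · intro b hb
      obtain ⟨u, hu, rfl⟩ := hS' hb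
      exact ⟨u, ⟨hu, hb⟩, rfl⟩
  have hdomD' : IsDomSet (strongProd (⊤ : SimpleGraph (Fin n)) H) D' := by
    rw [isDomSet_sp hn, himg]; exact hdom'
  have : D' = D := hD.2 _ hsub hdomD'
  rw [← himg, this]

lemma min_base_to_sp (hn : 0 < n) {S : Set β} (hS : IsMinimalDomSet H S) :
    IsMinimalDomSet (strongProd (⊤ : SimpleGraph (Fin n)) H)
      ((fun b => ((⟨0, hn⟩ : Fin n), b)) '' S) := by
  set D := (fun b => ((⟨0, hn⟩ : Fin n), b)) '' S with hDdef
  have himg : Prod.snd '' D = S := by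
    ext b; constructor
    · rintro ⟨u, ⟨c, hc, rfl⟩, rfl⟩; exact hc
    · intro hb; exact ⟨_, ⟨b, hb, rfl⟩, rfl⟩
  refine ⟨(isDomSet_sp hn).2 (himg ▸ hS.1), ?_⟩
  intro D' hsub hdom'
  have hS' : Prod.snd '' D' = S := by
    refine hS.2 _ (himg ▸ Set.image_mono hsub) ((isDomSet_sp hn).1 hdom')
  apply Set.Subset.antisymm hsub
  rintro u ⟨c, hc, rfl⟩
  have : c ∈ Prod.snd '' D' := hS' ▸ hc
  obtain ⟨w, hw, hwc⟩ := this
  obtain ⟨d, hd, rfl⟩ := hsub hw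
  exact hwc ▸ hw

lemma minSets_eq (hn : 0 < n) :
    {m | ∃ D : Set (Fin n × β), IsMinimalDomSet (strongProd (⊤ : SimpleGraph (Fin n)) H) D ∧ D.ncard = m}
      = {m | ∃ S : Set β, IsMinimalDomSet H S ∧ S.ncard = m} := by
  ext m
  constructor
  · rintro ⟨D, hD, rfl⟩
    exact ⟨Prod.snd '' D, min_sp_to_base hn hD,
      (Set.ncard_image_of_injOn (min_inj hn hD)).symm ▸ rfl⟩
  · rintro ⟨S, hS, rfl⟩
    refine ⟨_, min_base_to_sp hn hS, ?_⟩
    exact Set.ncard_image_of_injective _ (fun a b h => congrArg Prod.snd h)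

lemma domNum_sp [Fintype β] (hn : 0 < n) :
    domNum (strongProd (⊤ : SimpleGraph (Fin n)) H) = domNum H := by
  unfold domNum
  apply le_antisymm
  · apply le_csInf
    · exact ⟨Nat.card β, Set.univ, fun v => ⟨v, Set.mem_univ _, Set.mem_insert _ _⟩,
        Set.ncard_univ β⟩
    rintro m ⟨S, hS, rfl⟩
    have hdom : IsDomSet (strongProd (⊤ : SimpleGraph (Fin n)) H)
        ((fun b => ((⟨0, hn⟩ : Fin n), b)) '' S) := by
      rw [isDomSet_sp hn]
      have himg : Prod.snd '' ((fun b => ((⟨0, hn⟩ : Fin n), b)) '' S) = S := by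
        ext b; constructor
        · rintro ⟨u, ⟨c, hc, rfl⟩, rfl⟩; exact hc
        · intro hb; exact ⟨_, ⟨b, hb, rfl⟩, rfl⟩
      rw [himg]; exact hS
    exact csInf_le (OrderBot.bddBelow _)
      ⟨_, hdom, Set.ncard_image_of_injective _ (fun a b h => congrArg Prod.snd h)⟩
  · apply le_csInf
    · exact ⟨Nat.card (Fin n × β), Set.univ, fun v => ⟨v, Set.mem_univ _, Set.mem_insert _ _⟩,
        Set.ncard_univ _⟩
    rintro m ⟨D, hD, rfl⟩
    calc sInf {m | ∃ S : Set β, IsDomSet H S ∧ S.ncard = m}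
        ≤ (Prod.snd '' D).ncard := csInf_le (OrderBot.bddBelow _) ⟨_, (isDomSet_sp hn).1 hD, rfl⟩
      _ ≤ D.ncard := Set.ncard_image_le D.toFinite

theorem stmt_4_aux : True := trivial

end Aux

/-- `Kₙ ⊠ H` is well-dominated iff `H` is well-dominated. -/
theorem stmt_4 {β : Type*} [Fintype β] (n : ℕ) (hn : 0 < n)
    (H : SimpleGraph β) :
    WellDominated (strongProd (⊤ : SimpleGraph (Fin n)) H) ↔ WellDominated H := by
  unfold WellDominated upperDomNum
  rw [domNum_sp hn, minSets_eq hn]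
end

section
/- Let G and H be connected graphs each of order at least 3. If the direct product G × H is well-dominated, then γ(G × H) = γ(G)·n(H) = γ(H)·n(G); furthermore γ(G) = α(G) and γ(H) = α(H). -/
open SimpleGraph

variable {V : Type*}

section MyAuxA
-- auxiliary lemmas
lemma ncard_prod' {a b : Type*} (s : Set a) (t : Set b) :
    (s ×ˢ t).ncard = s.ncard * t.ncard := by
  rw [← Nat.card_coe_set_eq, ← Nat.card_coe_set_eq, ← Nat.card_coe_set_eq,
    Nat.card_congr (Equiv.Set.prod s t), Nat.card_prod]

lemma exists_neighbor {β : Type*} [Fintype β] {H : SimpleGraph β}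
    (hH : H.Connected) (hβ : 2 ≤ Fintype.card β) (v : β) : ∃ w, H.Adj v w := by
  obtain ⟨w, hw⟩ := Fintype.exists_ne_of_one_lt_card (by omega) v
  obtain ⟨p⟩ := hH v w
  exact ⟨p.getVert 1, p.adj_snd (SimpleGraph.Walk.not_nil_of_ne hw.symm)⟩

variable [Fintype V] (G : SimpleGraph V)

lemma univ_dom : IsDomSet G Set.univ := fun v => ⟨v, trivial, Set.mem_insert _ _⟩

lemma domSet_nonempty : {n | ∃ D : Set V, IsDomSet G D ∧ D.ncard = n}.Nonempty :=
  ⟨_, Set.univ, univ_dom G, rfl⟩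

lemma exists_gamma_set : ∃ D : Set V, IsDomSet G D ∧ D.ncard = domNum G :=
  Nat.sInf_mem (domSet_nonempty G)

lemma domNum_le {D : Set V} (hD : IsDomSet G D) : domNum G ≤ D.ncard :=
  Nat.sInf_le ⟨D, hD, rfl⟩

lemma indep_bddAbove : BddAbove {n | ∃ A : Set V, IsIndep G A ∧ A.ncard = n} := by
  refine ⟨Fintype.card V, fun n ⟨A, _, hA⟩ => ?_⟩
  rw [← hA]
  simpa [Set.ncard_univ, Nat.card_eq_fintype_card] using
    Set.ncard_le_ncard (Set.subset_univ A) Set.finite_univ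

lemma exists_alpha_set : ∃ A : Set V, IsIndep G A ∧ A.ncard = _root_.indepNum G := by
  have hne : {n | ∃ A : Set V, IsIndep G A ∧ A.ncard = n}.Nonempty :=
    ⟨0, ∅, fun u h => absurd h (Set.notMem_empty u), by simp⟩
  exact Nat.sSup_mem hne (indep_bddAbove G)

lemma indepNum_le' {A : Set V} (hA : IsIndep G A) : A.ncard ≤ _root_.indepNum G :=
  le_csSup (indep_bddAbove G) ⟨A, hA, rfl⟩

/-- A maximum independent set is dominating. -/
lemma alpha_set_dom {A : Set V} (hA : IsIndep G A) (hmax : A.ncard = _root_.indepNum G) :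
    IsDomSet G A := by
  intro v
  by_cases hv : v ∈ A
  · exact ⟨v, hv, Set.mem_insert _ _⟩
  · by_contra hc
    push_neg at hc
    have hins : IsIndep G (insert v A) := by
      intro u hu w hw hadj
      rcases hu with rfl | hu
      · rcases hw with rfl | hw
        · exact G.irrefl hadj
        · exact hc w hw (Set.mem_insert_iff.mpr (Or.inr hadj.symm))
      · rcases hw with rfl | hw
        · exact hc u hu (Set.mem_insert_iff.mpr (Or.inr hadj))
        · exact hA u hu w hw hadj
    have := indepNum_le' G hins
    rw [Set.ncard_insert_of_notMem hv (Set.toFinite A), hmax] at this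
    omega

lemma domNum_le_indepNum : domNum G ≤ _root_.indepNum G := by
  obtain ⟨A, hA, hcard⟩ := exists_alpha_set G
  calc domNum G ≤ A.ncard := domNum_le G (alpha_set_dom G hA hcard)
    _ = _root_.indepNum G := hcard

end MyAuxA
section MyAuxB
variable {α β : Type*} [Fintype α] [Fintype β] (G : SimpleGraph α) (H : SimpleGraph β)

lemma dom_prod (hH : H.Connected) (hβ : 2 ≤ Fintype.card β)
    {D : Set α} (hD : IsDomSet G D) :
    IsDomSet (tensorProd G H) (D ×ˢ (Set.univ : Set β)) := by
  rintro ⟨g, k⟩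
  obtain ⟨u, huD, hu⟩ := hD g
  rcases hu with rfl | hadj
  · exact ⟨(g, k), ⟨huD, trivial⟩, Set.mem_insert _ _⟩
  · obtain ⟨k', hk'⟩ := exists_neighbor hH hβ k
    exact ⟨(u, k'), ⟨huD, trivial⟩,
      Set.mem_insert_iff.mpr (Or.inr (⟨(hadj : G.Adj u g), hk'.symm⟩ : G.Adj u g ∧ H.Adj k' k))⟩

lemma minimal_dom_prod (hH : H.Connected) (hβ : 2 ≤ Fintype.card β)
    {A : Set α} (hA : IsIndep G A) (hdom : IsDomSet G A) :
    IsMinimalDomSet (tensorProd G H) (A ×ˢ (Set.univ : Set β)) := by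
  refine ⟨dom_prod G H hH hβ hdom, fun D' hsub hdom' => ?_⟩
  refine Set.Subset.antisymm hsub ?_
  rintro ⟨g, k⟩ ⟨hgA, -⟩
  obtain ⟨⟨u, k'⟩, hmem', hcn⟩ := hdom' (g, k)
  rcases Set.mem_insert_iff.mp hcn with heq | hadj
  · exact heq ▸ hmem'
  · exact absurd (hadj : G.Adj u g ∧ H.Adj k' k).1 (hA u (hsub hmem').1 g hgA)

lemma minDom_bddAbove {W : Type*} [Fintype W] (T : SimpleGraph W) :
    BddAbove {n | ∃ D : Set W, IsMinimalDomSet T D ∧ D.ncard = n} := by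
  refine ⟨Fintype.card W, fun n ⟨D, _, hD⟩ => ?_⟩
  rw [← hD]
  simpa [Set.ncard_univ, Nat.card_eq_fintype_card] using
    Set.ncard_le_ncard (Set.subset_univ D) Set.finite_univ


lemma dom_prod₂ (hG : G.Connected) (hα : 2 ≤ Fintype.card α)
    {D : Set β} (hD : IsDomSet H D) :
    IsDomSet (tensorProd G H) ((Set.univ : Set α) ×ˢ D) := by
  rintro ⟨g, k⟩
  obtain ⟨u, huD, hu⟩ := hD k
  rcases hu with rfl | hadj
  · exact ⟨(g, k), ⟨trivial, huD⟩, Set.mem_insert _ _⟩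
  · obtain ⟨g', hg'⟩ := exists_neighbor hG hα g
    exact ⟨(g', u), ⟨trivial, huD⟩,
      Set.mem_insert_iff.mpr (Or.inr (⟨hg'.symm, (hadj : H.Adj u k)⟩ : G.Adj g' g ∧ H.Adj u k))⟩

lemma minimal_dom_prod₂ (hG : G.Connected) (hα : 2 ≤ Fintype.card α)
    {A : Set β} (hA : IsIndep H A) (hdom : IsDomSet H A) :
    IsMinimalDomSet (tensorProd G H) ((Set.univ : Set α) ×ˢ A) := by
  refine ⟨dom_prod₂ G H hG hα hdom, fun D' hsub hdom' => ?_⟩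
  refine Set.Subset.antisymm hsub ?_
  rintro ⟨g, k⟩ ⟨-, hkA⟩
  obtain ⟨⟨u, k'⟩, hmem', hcn⟩ := hdom' (g, k)
  rcases Set.mem_insert_iff.mp hcn with heq | hadj
  · exact heq ▸ hmem'
  · exact absurd (hadj : G.Adj u g ∧ H.Adj k' k).2 (hA k' (hsub hmem').2 k hkA)

lemma key_ineq₂ {α' β' : Type*} [Fintype α'] [Fintype β'] (G' : SimpleGraph α')
    (H' : SimpleGraph β') (hG' : G'.Connected) (hα' : 2 ≤ Fintype.card α') :
    domNum (tensorProd G' H') ≤ domNum H' * Fintype.card α' ∧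
    _root_.indepNum H' * Fintype.card α' ≤ upperDomNum (tensorProd G' H') := by
  constructor
  · obtain ⟨D, hD, hDcard⟩ := exists_gamma_set H'
    have := domNum_le (tensorProd G' H') (dom_prod₂ G' H' hG' hα' hD)
    rwa [ncard_prod', hDcard, Set.ncard_univ, Nat.card_eq_fintype_card, mul_comm] at this
  · obtain ⟨A, hA, hAcard⟩ := exists_alpha_set H'
    have hmin := minimal_dom_prod₂ G' H' hG' hα' hA (alpha_set_dom H' hA hAcard)
    have := le_csSup (minDom_bddAbove (tensorProd G' H'))
      (Set.mem_setOf.mpr ⟨_, hmin, rfl⟩)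
    rwa [ncard_prod', hAcard, Set.ncard_univ, Nat.card_eq_fintype_card, mul_comm] at this


lemma key_ineq {α' β' : Type*} [Fintype α'] [Fintype β'] (G' : SimpleGraph α')
    (H' : SimpleGraph β') (hH' : H'.Connected) (hβ' : 2 ≤ Fintype.card β') :
    domNum (tensorProd G' H') ≤ domNum G' * Fintype.card β' ∧
    _root_.indepNum G' * Fintype.card β' ≤ upperDomNum (tensorProd G' H') := by
  constructor
  · obtain ⟨D, hD, hDcard⟩ := exists_gamma_set G'
    have := domNum_le (tensorProd G' H') (dom_prod G' H' hH' hβ' hD)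
    rwa [ncard_prod', hDcard, Set.ncard_univ, Nat.card_eq_fintype_card] at this
  · obtain ⟨A, hA, hAcard⟩ := exists_alpha_set G'
    have hmin := minimal_dom_prod G' H' hH' hβ' hA (alpha_set_dom G' hA hAcard)
    have := le_csSup (minDom_bddAbove (tensorProd G' H'))
      (Set.mem_setOf.mpr ⟨_, hmin, rfl⟩)
    rwa [ncard_prod', hAcard, Set.ncard_univ, Nat.card_eq_fintype_card] at this
end MyAuxB

/-- If `G × H` is well-dominated (both factors connected of order `≥ 3`), then
`γ(G × H) = γ(G)n(H) = γ(H)n(G)`, and `γ(G) = α(G)`, `γ(H) = α(H)`. -/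


theorem stmt_7 {α β : Type*} [Fintype α] [Fintype β]
    (G : SimpleGraph α) (H : SimpleGraph β)
    (hG : G.Connected) (hH : H.Connected)
    (hα : 3 ≤ Fintype.card α) (hβ : 3 ≤ Fintype.card β)
    (h : WellDominated (tensorProd G H)) :
    domNum (tensorProd G H) = domNum G * Fintype.card β ∧
    domNum (tensorProd G H) = domNum H * Fintype.card α ∧
    domNum G = _root_.indepNum G ∧ domNum H = _root_.indepNum H := by
  have hβ2 : 2 ≤ Fintype.card β := by omega
  have hα2 : 2 ≤ Fintype.card α := by omega
  obtain ⟨h1, h2⟩ := key_ineq G H hH hβ2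
  obtain ⟨h1', h2'⟩ := key_ineq₂ G H hG hα2
  have h3 : domNum G ≤ _root_.indepNum G := domNum_le_indepNum G
  have h3' : domNum H ≤ _root_.indepNum H := domNum_le_indepNum H
  have hcβ : 0 < Fintype.card β := by omega
  have hcα : 0 < Fintype.card α := by omega
  rw [WellDominated] at h
  have c1 : domNum G * Fintype.card β ≤ _root_.indepNum G * Fintype.card β :=
    Nat.mul_le_mul_right _ h3
  have c1' : domNum H * Fintype.card α ≤ _root_.indepNum H * Fintype.card α :=
    Nat.mul_le_mul_right _ h3'
  have e1 : domNum (tensorProd G H) = domNum G * Fintype.card β :=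
    le_antisymm h1 (le_trans c1 (le_trans h2 h.ge))
  have e1' : domNum (tensorProd G H) = domNum H * Fintype.card α :=
    le_antisymm h1' (le_trans c1' (le_trans h2' h.ge))
  have e2 : domNum G * Fintype.card β = _root_.indepNum G * Fintype.card β :=
    le_antisymm c1 (by rw [← e1]; exact le_trans h2 h.ge)
  have e2' : domNum H * Fintype.card α = _root_.indepNum H * Fintype.card α :=
    le_antisymm c1' (by rw [← e1']; exact le_trans h2' h.ge)
  exact ⟨e1, e1', Nat.eq_of_mul_eq_mul_right hcβ e2, Nat.eq_of_mul_eq_mul_right hcα e2'⟩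
end

section
/- If D is an open irredundant dominating set of a graph G, then D × V(H) is an open irredundant, minimal dominating set of the Cartesian product G □ H, for any graph H. -/
open SimpleGraph

variable {V : Type*}

/-- If `D` is an open irredundant dominating set of `G`, then `D × V(H)` is an
open irredundant minimal dominating set of `G □ H`, for any graph `H`. -/
theorem stmt_11 {α β : Type*} (G : SimpleGraph α) (H : SimpleGraph β)
    (D : Set α) (hdom : IsDomSet G D) (hirr : IsOpenIrred G D) :
    IsOpenIrred (G □ H) (D ×ˢ (Set.univ : Set β)) ∧
    IsMinimalDomSet (G □ H) (D ×ˢ (Set.univ : Set β)) := by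
  have hcn : ∀ (x v : α), x ∈ closedNbhd G v ↔ x = v ∨ G.Adj v x := by
    intro x v
    simp [closedNbhd, SimpleGraph.mem_neighborSet]
  have hcnP : ∀ (x v : α × β), x ∈ closedNbhd (G □ H) v ↔
      x = v ∨ (G.Adj v.1 x.1 ∧ v.2 = x.2) ∨ (H.Adj v.2 x.2 ∧ v.1 = x.1) := by
    intro x v
    simp [closedNbhd, SimpleGraph.mem_neighborSet, SimpleGraph.boxProd_adj]
  -- key: the only dominator structure
  have hirr' : ∀ u ∈ D, ∀ h : β, ∃ x : α, G.Adj u x ∧ x ∉ D ∧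
      ∀ p ∈ D ×ˢ (Set.univ : Set β), p ≠ (u, h) →
        (x, h) ∉ closedNbhd (G □ H) p := by
    intro u hu h
    obtain ⟨x, hx, hpriv⟩ := hirr u hu
    rw [SimpleGraph.mem_neighborSet] at hx
    have hxu : x ≠ u := fun e => (G.loopless.irrefl u) (e ▸ hx)
    have hxD : x ∉ D := by
      intro hxD
      exact hpriv x hxD hxu ((hcn x x).2 (Or.inl rfl))
    refine ⟨x, hx, hxD, ?_⟩
    rintro ⟨d, h'⟩ ⟨hd, -⟩ hne hmem
    rw [hcnP] at hmem
    by_cases hdu : d = u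
    · subst hdu
      have hh : h' ≠ h := fun e => hne (by simp [e])
      rcases hmem with he | ⟨hg, he⟩ | ⟨hh2, he⟩
      · exact hxu (congrArg Prod.fst he)
      · exact hh he
      · exact hxu he.symm
    · have hnx := hpriv d hd hdu
      rw [hcn] at hnx
      push_neg at hnx
      rcases hmem with he | ⟨hg, he⟩ | ⟨hh2, he⟩
      · exact hnx.1 (congrArg Prod.fst he)
      · exact hnx.2 hg
      · have hdx : d = x := he; exact hxD (hdx ▸ hd)
  have hdomP : IsDomSet (G □ H) (D ×ˢ (Set.univ : Set β)) := by
    rintro ⟨g, h⟩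
    obtain ⟨u, hu, hg⟩ := hdom g
    rw [hcn] at hg
    refine ⟨(u, h), ⟨hu, trivial⟩, ?_⟩
    rw [hcnP]
    rcases hg with rfl | hadj
    · exact Or.inl rfl
    · exact Or.inr (Or.inl ⟨hadj, rfl⟩)
  constructor
  · rintro ⟨u, h⟩ ⟨hu, -⟩
    obtain ⟨x, hadj, hxD, hpriv⟩ := hirr' u hu h
    refine ⟨(x, h), ?_, fun p hp hne => hpriv p hp hne⟩
    rw [SimpleGraph.mem_neighborSet, SimpleGraph.boxProd_adj]
    exact Or.inl ⟨hadj, rfl⟩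
  · refine ⟨hdomP, fun D' hsub hdom' => ?_⟩
    apply Set.Subset.antisymm hsub
    rintro ⟨u, h⟩ ⟨hu, -⟩
    obtain ⟨x, hadj, hxD, hpriv⟩ := hirr' u hu h
    obtain ⟨p, hp, hxp⟩ := hdom' (x, h)
    have hpD : p ∈ D ×ˢ (Set.univ : Set β) := hsub hp
    by_cases hpe : p = (u, h)
    · exact hpe ▸ hp
    · exact absurd hxp (hpriv p hpD hpe)
end

section
/- If H is a connected graph of order at least 3, then the Cartesian product K₂ □ H is not well-dominated. -/
open SimpleGraph

variable {V : Type*}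

lemma key_walk {β : Type*} {H : SimpleGraph β} : ∀ {a b : β}, a ≠ b → (p : H.Walk a b) →
    p.IsPath → H.Adj a b ∨ ∃ u v w, v ≠ w ∧ H.Adj u v ∧ H.Adj u w
  | _, _, hab, Walk.nil, _ => absurd rfl hab
  | _, _, _, Walk.cons h Walk.nil, _ => Or.inl h
  | a, b, hab, Walk.cons h (Walk.cons h2 q2), hp => by
      refine Or.inr ⟨_, a, _, ?_, h.symm, h2⟩
      rw [Walk.cons_isPath_iff] at hp
      intro hay
      apply hp.2
      rw [hay, Walk.support_cons]
      exact List.mem_cons_of_mem _ q2.start_mem_support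

lemma exists_two_nbrs {β : Type*} [Fintype β] (H : SimpleGraph β)
    (hH : H.Connected) (hβ : 3 ≤ Fintype.card β) :
    ∃ u v w, v ≠ w ∧ H.Adj u v ∧ H.Adj u w := by
  classical
  obtain ⟨s, -, hcard⟩ := Finset.exists_subset_card_eq (s := (Finset.univ : Finset β)) (n := 3) (by simpa using hβ)
  obtain ⟨a, b, c, hab, hac, hbc, -⟩ := Finset.card_eq_three.mp hcard
  have pab := (hH.preconnected a b).some.toPath
  have pac := (hH.preconnected a c).some.toPath
  rcases key_walk hab pab.1 pab.2 with h1 | h1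
  · rcases key_walk hac pac.1 pac.2 with h2 | h2
    · exact ⟨a, b, c, hbc, h1, h2⟩
    · exact h2
  · exact h1

lemma mem_closedNbhd_iff {G : SimpleGraph V} {p q : V} :
    p ∈ closedNbhd G q ↔ p = q ∨ G.Adj q p := by
  simp [closedNbhd, Set.mem_insert_iff, mem_neighborSet]

/-- If `H` is connected of order at least `3`, then `K₂ □ H` is not well-dominated. -/
theorem stmt_17 {β : Type*} [Fintype β] (H : SimpleGraph β)
    (hH : H.Connected) (hβ : 3 ≤ Fintype.card β) :
    ¬ WellDominated ((⊤ : SimpleGraph (Fin 2)) □ H) := by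
  intro hwd
  obtain ⟨u, v, w, hvw, huv, huw⟩ := exists_two_nbrs H hH hβ
  set P := (⊤ : SimpleGraph (Fin 2)) □ H with hP
  -- D0 : the bottom layer, a minimal dominating set of size n
  set D0 : Set (Fin 2 × β) := (fun b => ((0 : Fin 2), b)) '' Set.univ with hD0def
  have hD0mem : ∀ p : Fin 2 × β, p ∈ D0 ↔ p.1 = 0 := by
    intro p
    constructor
    · rintro ⟨x, -, hx⟩; rw [← hx]
    · intro h
      exact ⟨p.2, Set.mem_univ _, by rw [← h]⟩
  have hdom0 : IsDomSet P D0 := by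
    rintro ⟨i, b⟩
    refine ⟨((0 : Fin 2), b), (hD0mem _).mpr rfl, ?_⟩
    rw [mem_closedNbhd_iff]
    fin_cases i
    · exact Or.inl rfl
    · exact Or.inr (boxProd_adj_left.mpr (by simp))
  have hmin0 : IsMinimalDomSet P D0 := by
    refine ⟨hdom0, fun D' hsub hdom' => ?_⟩
    refine Set.Subset.antisymm hsub fun p hp => ?_
    have hp1 : p.1 = 0 := (hD0mem p).mp hp
    obtain ⟨q, hqD', hq⟩ := hdom' ((1 : Fin 2), p.2)
    have hq1 : q.1 = 0 := (hD0mem q).mp (hsub hqD')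
    rw [mem_closedNbhd_iff] at hq
    rcases hq with hq | hq
    · exfalso
      have h1' : (1 : Fin 2) = q.1 := congrArg Prod.fst hq
      rw [hq1] at h1'
      exact absurd h1' (by decide)
    · rw [boxProd_adj] at hq
      rcases hq with ⟨-, hq2⟩ | ⟨-, hq2⟩
      · have : q = p := by
          ext
          · rw [hq1, hp1]
          · exact hq2
        rwa [← this]
      · simp only [] at hq2
        rw [hq1] at hq2
        exact absurd hq2 (by decide)
  have hcard0 : D0.ncard = Nat.card β := by
    rw [hD0def, Set.ncard_image_of_injective _ fun x y hxy => (Prod.ext_iff.mp hxy).2,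
      Set.ncard_univ]
  -- D1 : a dominating set of size n - 1
  have huv' : u ≠ v := H.ne_of_adj huv
  have huw' : u ≠ w := H.ne_of_adj huw
  set D1 : Set (Fin 2 × β) :=
    insert ((0 : Fin 2), u) ((fun b => ((1 : Fin 2), b)) '' ({v, w} : Set β)ᶜ) with hD1def
  have hdom1 : IsDomSet P D1 := by
    rintro ⟨i, b⟩
    by_cases hbv : b = v
    · subst hbv
      fin_cases i
      · refine ⟨((0 : Fin 2), u), Set.mem_insert _ _, ?_⟩
        rw [mem_closedNbhd_iff]
        exact Or.inr (boxProd_adj_right.mpr huv)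
      · refine ⟨((1 : Fin 2), u), Set.mem_insert_of_mem _ ⟨u, by simp [huv', huw'], rfl⟩, ?_⟩
        rw [mem_closedNbhd_iff]
        exact Or.inr (boxProd_adj_right.mpr huv)
    · by_cases hbw : b = w
      · subst hbw
        fin_cases i
        · refine ⟨((0 : Fin 2), u), Set.mem_insert _ _, ?_⟩
          rw [mem_closedNbhd_iff]
          exact Or.inr (boxProd_adj_right.mpr huw)
        · refine ⟨((1 : Fin 2), u), Set.mem_insert_of_mem _ ⟨u, by simp [huv', huw'], rfl⟩, ?_⟩
          rw [mem_closedNbhd_iff]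
          exact Or.inr (boxProd_adj_right.mpr huw)
      · have hmem : ((1 : Fin 2), b) ∈ D1 :=
          Set.mem_insert_of_mem _ ⟨b, by simp [hbv, hbw], rfl⟩
        fin_cases i
        · refine ⟨((1 : Fin 2), b), hmem, ?_⟩
          rw [mem_closedNbhd_iff]
          exact Or.inr (boxProd_adj_left.mpr (by simp))
        · exact ⟨((1 : Fin 2), b), hmem, Or.inl rfl⟩
  have hcard1 : D1.ncard ≤ Nat.card β - 2 + 1 := by
    rw [hD1def]
    refine le_trans (Set.ncard_insert_le _ _) ?_
    have h1 : ((fun b => ((1 : Fin 2), b)) '' ({v, w} : Set β)ᶜ).ncard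
        = (({v, w} : Set β)ᶜ).ncard :=
      Set.ncard_image_of_injective _ fun x y hxy => (Prod.ext_iff.mp hxy).2
    have h2 : (({v, w} : Set β)ᶜ).ncard = Nat.card β - 2 := by
      rw [Set.compl_eq_univ_diff, Set.ncard_diff (Set.subset_univ _), Set.ncard_univ,
        Set.ncard_pair hvw]
    omega
  -- conclude
  have hbdd : BddAbove {n | ∃ D : Set (Fin 2 × β), IsMinimalDomSet P D ∧ D.ncard = n} := by
    refine ⟨Nat.card (Fin 2 × β), ?_⟩
    rintro m ⟨D, -, hD⟩
    rw [← hD, ← Set.ncard_univ]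
    exact Set.ncard_le_ncard (Set.subset_univ D) Set.finite_univ
  have hle : domNum P ≤ D1.ncard := Nat.sInf_le ⟨D1, hdom1, rfl⟩
  have hge : D0.ncard ≤ upperDomNum P := le_csSup hbdd ⟨D0, hmin0, rfl⟩
  have hn : 3 ≤ Nat.card β := by rw [Nat.card_eq_fintype_card]; exact hβ
  rw [hcard0] at hge
  have := hwd
  unfold WellDominated at this
  omega
end

section
/- If H is a connected graph of order at least 4, then the Cartesian product K₃ □ H is not well-dominated. -/
open SimpleGraph

variable {V : Type*}

namespace Stmt18Aux

lemma mem_closedNbhd_iff (G : SimpleGraph V) (u v : V) :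
    v ∈ closedNbhd G u ↔ v = u ∨ G.Adj u v := by
  simp [closedNbhd, Set.mem_insert_iff]

lemma domNum_le_ncard (G : SimpleGraph V) (D : Set V) (hD : IsDomSet G D) :
    domNum G ≤ D.ncard := Nat.sInf_le ⟨D, hD, rfl⟩

lemma ncard_le_upperDomNum [Fintype V] (G : SimpleGraph V) (D : Set V)
    (hD : IsMinimalDomSet G D) : D.ncard ≤ upperDomNum G := by
  refine le_csSup ⟨Fintype.card V, ?_⟩ ⟨D, hD, rfl⟩
  rintro m ⟨D', _, rfl⟩
  exact (Set.ncard_le_ncard (Set.subset_univ D') Set.finite_univ).trans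
    (by simp [Set.ncard_univ])

lemma notWD [Fintype V] (G : SimpleGraph V) (D₁ D₂ : Set V)
    (h1 : IsDomSet G D₁) (h2 : IsMinimalDomSet G D₂) (hlt : D₁.ncard < D₂.ncard) :
    ¬ WellDominated G := by
  intro hwd
  have a := domNum_le_ncard G D₁ h1
  have b := ncard_le_upperDomNum G D₂ h2
  rw [WellDominated] at hwd
  omega




set_option linter.unusedSectionVars false

variable {β : Type*} [Fintype β] (H : SimpleGraph β)

def rowSet (β : Type*) : Set (Fin 3 × β) := {p | p.1 = 0}

lemma row_dom : IsDomSet ((⊤ : SimpleGraph (Fin 3)) □ H) (rowSet β) := by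
  rintro ⟨i, h⟩
  refine ⟨(0, h), rfl, ?_⟩
  rw [mem_closedNbhd_iff]
  by_cases hi : i = 0
  · subst hi; exact Or.inl rfl
  · exact Or.inr (by rw [boxProd_adj]; exact Or.inl ⟨(top_adj _ _).2 (Ne.symm hi), rfl⟩)

lemma row_minimal : IsMinimalDomSet ((⊤ : SimpleGraph (Fin 3)) □ H) (rowSet β) := by
  refine ⟨row_dom H, ?_⟩
  intro D' hsub hdom'
  refine Set.Subset.antisymm hsub ?_
  rintro ⟨i, h⟩ (hi : i = 0)
  subst hi
  obtain ⟨⟨j, k⟩, huD, hmem⟩ := hdom' (1, h)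
  have hu0 : j = 0 := hsub huD
  subst hu0
  rw [mem_closedNbhd_iff] at hmem
  rcases hmem with heq | hadj
  · have h10 : (1 : Fin 3) = 0 := congrArg Prod.fst heq
    exact absurd h10 (by decide)
  · rw [boxProd_adj] at hadj
    rcases hadj with ⟨_, h2⟩ | ⟨_, h1⟩
    · have hk : k = h := h2
      rw [← hk]; exact huD
    · have h01 : (0 : Fin 3) = 1 := h1
      exact absurd h01 (by decide)

lemma row_ncard : (rowSet β).ncard = Fintype.card β := by
  have himg : rowSet β = (fun h : β => ((0 : Fin 3), h)) '' Set.univ := by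
    ext ⟨i, h⟩
    simp only [rowSet, Set.mem_setOf_eq, Set.image_univ, Set.mem_range, Prod.mk.injEq]
    constructor
    · rintro rfl; exact ⟨h, rfl, rfl⟩
    · rintro ⟨x, h1, h2⟩; exact h1.symm
  rw [himg, Set.ncard_image_of_injective _ (fun a b hab => congrArg Prod.snd hab),
    Set.ncard_univ, Nat.card_eq_fintype_card]




variable {β : Type*} [Fintype β] (H : SimpleGraph β)

lemma notWD_of_C1 (hβ : 4 ≤ Fintype.card β)
    (b t₁ t₂ t₃ : β) (h1 : H.Adj b t₁) (h2 : H.Adj b t₂) (h3 : H.Adj b t₃)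
    (h12 : t₁ ≠ t₂) (h13 : t₁ ≠ t₃) (h23 : t₂ ≠ t₃) :
    ¬ WellDominated ((⊤ : SimpleGraph (Fin 3)) □ H) := by
  classical
  set g : β → Fin 3 × β :=
    fun h => if h = t₁ then (1, b) else if h = t₂ then (2, b) else (0, h) with hg
  have hginj : Function.Injective g := by
    intro x y hxy
    simp only [hg] at hxy
    split_ifs at hxy <;> simp_all [Prod.ext_iff]
  set D : Set (Fin 3 × β) := g '' (Set.univ \ {t₃}) with hD
  have hmemD : ∀ x : β, x ≠ t₃ → g x ∈ D := fun x hx => ⟨x, by simp [hx], rfl⟩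
  have hcolb : ∀ i : Fin 3, (i, b) ∈ D := by
    intro i
    fin_cases i
    · have : g b = (0, b) := by simp [hg, h1.ne, h2.ne]
      exact this ▸ hmemD b h3.ne
    · have : g t₁ = (1, b) := by simp [hg]
      exact this ▸ hmemD t₁ h13
    · have : g t₂ = (2, b) := by simp [hg, Ne.symm h12]
      exact this ▸ hmemD t₂ h23
  have hdom : IsDomSet ((⊤ : SimpleGraph (Fin 3)) □ H) D := by
    rintro ⟨i, h⟩
    by_cases hcase : h = t₁ ∨ h = t₂ ∨ h = t₃
    · refine ⟨(i, b), hcolb i, ?_⟩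
      rw [mem_closedNbhd_iff]
      refine Or.inr ?_
      rw [boxProd_adj]
      refine Or.inr ⟨?_, rfl⟩
      rcases hcase with rfl | rfl | rfl
      exacts [h1, h2, h3]
    · push_neg at hcase
      obtain ⟨hh1, hh2, hh3⟩ := hcase
      have : g h = (0, h) := by simp [hg, hh1, hh2]
      refine ⟨(0, h), this ▸ hmemD h hh3, ?_⟩
      rw [mem_closedNbhd_iff]
      by_cases hi : i = 0
      · subst hi; exact Or.inl rfl
      · exact Or.inr (by rw [boxProd_adj]; exact Or.inl ⟨(top_adj _ _).2 (Ne.symm hi), rfl⟩)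
  have hcard : D.ncard = Fintype.card β - 1 := by
    rw [hD, Set.ncard_image_of_injective _ hginj,
      Set.ncard_diff_singleton_of_mem (Set.mem_univ _), Set.ncard_univ,
      Nat.card_eq_fintype_card]
  refine notWD _ D (rowSet β) hdom (row_minimal H) ?_
  rw [hcard, row_ncard]
  omega




variable {β : Type*} [Fintype β] (H : SimpleGraph β)

lemma notWD_of_C2 (hβ : 4 ≤ Fintype.card β)
    (a b c a' c' : β) (hba : H.Adj b a) (hbc : H.Adj b c) (hac : a ≠ c)
    (ha' : H.Adj a a') (ha'b : a' ≠ b) (ha'c : a' ≠ c)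
    (hc' : H.Adj c c') (hc'a : c' ≠ a) (hc'b : c' ≠ b) :
    ¬ WellDominated ((⊤ : SimpleGraph (Fin 3)) □ H) := by
  classical
  set g : β → Fin 3 × β :=
    fun h => if h = a then (1, b) else if h = c then (2, b) else (0, h) with hg
  have hginj : Function.Injective g := by
    intro x y hxy
    simp only [hg] at hxy
    split_ifs at hxy <;> simp_all [Prod.ext_iff]
  set D : Set (Fin 3 × β) := g '' (Set.univ \ {b}) with hD
  have hmemD : ∀ x : β, x ≠ b → g x ∈ D := fun x hx => ⟨x, by simp [hx], rfl⟩
  have h1b : (1, b) ∈ D := by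
    have : g a = (1, b) := by simp [hg]
    exact this ▸ hmemD a hba.ne'
  have h2b : (2, b) ∈ D := by
    have : g c = (2, b) := by simp [hg, Ne.symm hac]
    exact this ▸ hmemD c hbc.ne'
  have hrow0 : ∀ x : β, x ≠ a → x ≠ c → x ≠ b → (0, x) ∈ D := by
    intro x hxa hxc hxb
    have : g x = (0, x) := by simp [hg, hxa, hxc]
    exact this ▸ hmemD x hxb
  have hdom : IsDomSet ((⊤ : SimpleGraph (Fin 3)) □ H) D := by
    rintro ⟨i, h⟩
    by_cases hhb : h = b
    · subst hhb
      fin_cases i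
      · exact ⟨(1, h), h1b, by
          rw [mem_closedNbhd_iff, boxProd_adj]
          exact Or.inr (Or.inl ⟨(top_adj _ _).2 ((by decide : (1:Fin 3) ≠ 0)), rfl⟩)⟩
      · exact ⟨(1, h), h1b, by rw [mem_closedNbhd_iff]; exact Or.inl rfl⟩
      · exact ⟨(2, h), h2b, by rw [mem_closedNbhd_iff]; exact Or.inl rfl⟩
    by_cases hha : h = a
    · subst hha
      fin_cases i
      · exact ⟨(0, a'), hrow0 a' ha'.ne' ha'c ha'b, by
          rw [mem_closedNbhd_iff, boxProd_adj]
          exact Or.inr (Or.inr ⟨ha'.symm, rfl⟩)⟩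
      · exact ⟨(1, b), h1b, by
          rw [mem_closedNbhd_iff, boxProd_adj]
          exact Or.inr (Or.inr ⟨hba, rfl⟩)⟩
      · exact ⟨(2, b), h2b, by
          rw [mem_closedNbhd_iff, boxProd_adj]
          exact Or.inr (Or.inr ⟨hba, rfl⟩)⟩
    by_cases hhc : h = c
    · subst hhc
      fin_cases i
      · exact ⟨(0, c'), hrow0 c' hc'a hc'.ne' hc'b, by
          rw [mem_closedNbhd_iff, boxProd_adj]
          exact Or.inr (Or.inr ⟨hc'.symm, rfl⟩)⟩
      · exact ⟨(1, b), h1b, by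
          rw [mem_closedNbhd_iff, boxProd_adj]
          exact Or.inr (Or.inr ⟨hbc, rfl⟩)⟩
      · exact ⟨(2, b), h2b, by
          rw [mem_closedNbhd_iff, boxProd_adj]
          exact Or.inr (Or.inr ⟨hbc, rfl⟩)⟩
    · refine ⟨(0, h), hrow0 h hha hhc hhb, ?_⟩
      rw [mem_closedNbhd_iff]
      by_cases hi : i = 0
      · subst hi; exact Or.inl rfl
      · exact Or.inr (by rw [boxProd_adj]; exact Or.inl ⟨(top_adj _ _).2 (Ne.symm hi), rfl⟩)
  have hcard : D.ncard = Fintype.card β - 1 := by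
    rw [hD, Set.ncard_image_of_injective _ hginj,
      Set.ncard_diff_singleton_of_mem (Set.mem_univ _), Set.ncard_univ,
      Nat.card_eq_fintype_card]
  refine notWD _ D (rowSet β) hdom (row_minimal H) ?_
  rw [hcard, row_ncard]
  omega




variable {β : Type*} [Fintype β] (H : SimpleGraph β)

def colSet (β : Type*) (x : β) : Set (Fin 3 × β) := {p | p.2 = x}

lemma colSet_ncard (x : β) : (colSet β x).ncard = 3 := by
  have himg : colSet β x = (fun i : Fin 3 => (i, x)) '' Set.univ := by
    ext ⟨i, h⟩
    simp only [colSet, Set.mem_setOf_eq, Set.image_univ, Set.mem_range, Prod.mk.injEq]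
    constructor
    · rintro rfl; exact ⟨i, rfl, rfl⟩
    · rintro ⟨j, h1, h2⟩; exact h2.symm
  rw [himg, Set.ncard_image_of_injective _ (fun a b hab => congrArg Prod.fst hab),
    Set.ncard_univ]
  simp

lemma notWD_of_pair (b c a d : β) (hba : H.Adj b a) (hcd : H.Adj c d)
    (hac : a ∉ closedNbhd H c) (hdb : d ∉ closedNbhd H b)
    (hdomH : ∀ v : β, v ∈ closedNbhd H b ∪ closedNbhd H c)
    (hn : Fintype.card β ≤ 5) :
    ¬ WellDominated ((⊤ : SimpleGraph (Fin 3)) □ H) := by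
  classical
  have hbc : b ≠ c := by
    intro h
    exact hac (by rw [mem_closedNbhd_iff]; exact Or.inr (h ▸ hba))
  have hanec : a ≠ c := fun h => hac (by rw [mem_closedNbhd_iff]; exact Or.inl h)
  have hanb : a ≠ b := hba.ne'
  have hdnb : d ≠ b := fun h => hdb (by rw [mem_closedNbhd_iff]; exact Or.inl h)
  have hdnc : d ≠ c := hcd.ne'
  have hnca : ¬ H.Adj c a := fun h => hac (by rw [mem_closedNbhd_iff]; exact Or.inr h)
  have hnbd : ¬ H.Adj b d := fun h => hdb (by rw [mem_closedNbhd_iff]; exact Or.inr h)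
  set D : Set (Fin 3 × β) := colSet β b ∪ colSet β c with hD
  have hmemb : ∀ i : Fin 3, (i, b) ∈ D := fun i => Or.inl rfl
  have hmemc : ∀ i : Fin 3, (i, c) ∈ D := fun i => Or.inr rfl
  have hdom : IsDomSet ((⊤ : SimpleGraph (Fin 3)) □ H) D := by
    rintro ⟨i, h⟩
    rcases hdomH h with hb | hc
    · rw [mem_closedNbhd_iff] at hb
      rcases hb with rfl | hadj
      · exact ⟨(i, h), hmemb i, by rw [mem_closedNbhd_iff]; exact Or.inl rfl⟩
      · exact ⟨(i, b), hmemb i, by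
          rw [mem_closedNbhd_iff, boxProd_adj]
          exact Or.inr (Or.inr ⟨hadj, rfl⟩)⟩
    · rw [mem_closedNbhd_iff] at hc
      rcases hc with rfl | hadj
      · exact ⟨(i, h), hmemc i, by rw [mem_closedNbhd_iff]; exact Or.inl rfl⟩
      · exact ⟨(i, c), hmemc i, by
          rw [mem_closedNbhd_iff, boxProd_adj]
          exact Or.inr (Or.inr ⟨hadj, rfl⟩)⟩
  have hmin : IsMinimalDomSet ((⊤ : SimpleGraph (Fin 3)) □ H) D := by
    refine ⟨hdom, ?_⟩
    intro D' hsub hdom'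
    refine Set.Subset.antisymm hsub ?_
    have hkey : ∀ i : Fin 3, (i, b) ∈ D' ∧ (i, c) ∈ D' := by
      intro i
      constructor
      · obtain ⟨⟨j, k⟩, huD, hmem⟩ := hdom' (i, a)
        have hk : k = b ∨ k = c := hsub huD
        rw [mem_closedNbhd_iff] at hmem
        rcases hmem with heq | hadj
        · exfalso
          have hka : k = a := (congrArg Prod.snd heq).symm
          rcases hk with rfl | rfl
          · exact hanb hka.symm
          · exact hanec hka.symm
        · rw [boxProd_adj] at hadj
          rcases hadj with ⟨_, h2⟩ | ⟨hH2, h1⟩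
          · exfalso
            have hka : k = a := h2
            rcases hk with rfl | rfl
            · exact hanb hka.symm
            · exact hanec hka.symm
          · have hji : j = i := h1
            subst hji
            rcases hk with rfl | rfl
            · exact huD
            · exact absurd (hH2 : H.Adj k a) hnca
      · obtain ⟨⟨j, k⟩, huD, hmem⟩ := hdom' (i, d)
        have hk : k = b ∨ k = c := hsub huD
        rw [mem_closedNbhd_iff] at hmem
        rcases hmem with heq | hadj
        · exfalso
          have hkd : k = d := (congrArg Prod.snd heq).symm
          rcases hk with rfl | rfl
          · exact hdnb hkd.symm
          · exact hdnc hkd.symm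
        · rw [boxProd_adj] at hadj
          rcases hadj with ⟨_, h2⟩ | ⟨hH2, h1⟩
          · exfalso
            have hkd : k = d := h2
            rcases hk with rfl | rfl
            · exact hdnb hkd.symm
            · exact hdnc hkd.symm
          · have hji : j = i := h1
            subst hji
            rcases hk with rfl | rfl
            · exact absurd (hH2 : H.Adj k d) hnbd
            · exact huD
    rintro ⟨i, h⟩ hmem
    rcases hmem with hb | hc
    · have : h = b := hb
      subst this; exact (hkey i).1
    · have : h = c := hc
      subst this; exact (hkey i).2
  have hcard : D.ncard = 6 := by
    rw [hD, Set.ncard_union_eq ?_ (Set.toFinite _) (Set.toFinite _),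
      colSet_ncard, colSet_ncard]
    rw [Set.disjoint_left]
    rintro ⟨i, h⟩ h1 h2
    exact hbc ((h1 : h = b).symm.trans (h2 : h = c))
  refine notWD _ (rowSet β) D (row_dom H) hmin ?_
  rw [hcard, row_ncard]
  omega




set_option linter.unusedSectionVars false

variable {β : Type*} [Fintype β] {H : SimpleGraph β}

lemma walk_closure {S : Set β}
    (hS : ∀ u ∈ S, ∀ v, H.Adj u v → v ∈ S) :
    ∀ {u v : β}, H.Walk u v → u ∈ S → v ∈ S := by
  intro u v w
  induction w with
  | nil => exact id
  | cons h _ ih => exact fun hu => ih (hS _ hu _ h)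

lemma card_le_four (x y z w : β)
    (h : ∀ v : β, v = x ∨ v = y ∨ v = z ∨ v = w) : Fintype.card β ≤ 4 := by
  classical
  have h1 : (Set.univ : Set β) ⊆ {x, y, z, w} := fun v _ => by
    rcases h v with rfl | rfl | rfl | rfl <;> simp
  have h2 := Set.ncard_le_ncard h1 (Set.toFinite _)
  rw [Set.ncard_univ, Nat.card_eq_fintype_card] at h2
  refine h2.trans ?_
  calc ({x, y, z, w} : Set β).ncard ≤ ({y, z, w} : Set β).ncard + 1 :=
        Set.ncard_insert_le _ _
    _ ≤ (({z, w} : Set β).ncard + 1) + 1 := by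
        exact Nat.add_le_add_right (Set.ncard_insert_le _ _) 1
    _ ≤ ((({w} : Set β).ncard + 1) + 1) + 1 := by
        exact Nat.add_le_add_right (Nat.add_le_add_right (Set.ncard_insert_le _ _) 1) 1
    _ = 4 := by rw [Set.ncard_singleton]

lemma card_le_three (x y z : β)
    (h : ∀ v : β, v = x ∨ v = y ∨ v = z) : Fintype.card β ≤ 3 := by
  have h4 := card_le_four x y z z (fun v => by
    rcases h v with rfl | rfl | rfl
    · exact Or.inl rfl
    · exact Or.inr (Or.inl rfl)
    · exact Or.inr (Or.inr (Or.inl rfl)))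
  -- sharpen: {x,y,z,z} = {x,y,z}
  classical
  have h1 : (Set.univ : Set β) ⊆ {x, y, z} := fun v _ => by
    rcases h v with rfl | rfl | rfl <;> simp
  have h2 := Set.ncard_le_ncard h1 (Set.toFinite _)
  rw [Set.ncard_univ, Nat.card_eq_fintype_card] at h2
  refine h2.trans ?_
  calc ({x, y, z} : Set β).ncard ≤ ({y, z} : Set β).ncard + 1 := Set.ncard_insert_le _ _
    _ ≤ (({z} : Set β).ncard + 1) + 1 := Nat.add_le_add_right (Set.ncard_insert_le _ _) 1
    _ = 3 := by rw [Set.ncard_singleton]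

lemma aux3 (H : SimpleGraph β) (hH : H.Connected) (hβ : 4 ≤ Fintype.card β)
    (hdeg : ∀ b p q r, H.Adj b p → H.Adj b q → p ≠ q → H.Adj b r → r = p ∨ r = q)
    (hC2 : ∀ a b c, H.Adj b a → H.Adj b c → a ≠ c →
      (∃ a', H.Adj a a' ∧ a' ≠ b ∧ a' ≠ c) → ∀ c', H.Adj c c' → c' ≠ a → c' = b)
    (x y z : β) (hyx : H.Adj y x) (hyz : H.Adj y z) (hxz : x ≠ z)
    (hx : ∀ v, H.Adj x v → v = y ∨ v = z) :
    ¬ WellDominated ((⊤ : SimpleGraph (Fin 3)) □ H) := by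
  have hy : ∀ v, H.Adj y v → v = x ∨ v = z := fun v hv => hdeg y x z v hyx hyz hxz hv
  by_cases hxz2 : H.Adj x z
  · exfalso
    have hz3 : ∀ v, H.Adj z v → v = x ∨ v = y :=
      fun v hv => hdeg z x y v hxz2.symm hyz.symm (hyx.ne.symm) hv
    have hclosed : ∀ u ∈ ({x, y, z} : Set β), ∀ v, H.Adj u v → v ∈ ({x, y, z} : Set β) := by
      intro u hu v huv
      simp only [Set.mem_insert_iff, Set.mem_singleton_iff] at hu ⊢
      rcases hu with rfl | rfl | rfl
      · rcases hx v huv with rfl | rfl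
        · exact Or.inr (Or.inl rfl)
        · exact Or.inr (Or.inr rfl)
      · rcases hy v huv with rfl | rfl
        · exact Or.inl rfl
        · exact Or.inr (Or.inr rfl)
      · rcases hz3 v huv with rfl | rfl
        · exact Or.inl rfl
        · exact Or.inr (Or.inl rfl)
    have hall : ∀ t : β, t = x ∨ t = y ∨ t = z := by
      intro t
      obtain ⟨wlk⟩ := hH.preconnected x t
      have := walk_closure hclosed wlk (by simp)
      simpa using this
    have := card_le_three x y z hall
    omega
  · have hx' : ∀ v, H.Adj x v → v = y := by
      intro v hv
      rcases hx v hv with rfl | rfl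
      · rfl
      · exact absurd hv hxz2
    by_cases hzw : ∃ w, H.Adj z w ∧ w ≠ y
    · obtain ⟨w, hzw, hwy⟩ := hzw
      have hwx : w ≠ x := by
        rintro rfl
        exact hxz2 hzw.symm
      have hnyw : ¬ H.Adj y w := by
        intro hyw
        rcases hy w hyw with rfl | rfl
        · exact hwx rfl
        · exact hzw.ne' rfl
      have hw : ∀ v, H.Adj w v → v = z := by
        intro v hv
        by_cases hvy : v = y
        · exact absurd (hvy ▸ hv).symm hnyw
        · -- use hC2 with (a,b,c) = (y,z,w)
          have h1 := hC2 y z w hyz.symm hzw (Ne.symm hwy)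
            ⟨x, hyx, hxz, fun hh => hwx hh.symm⟩ v hv hvy
          exact h1
      have hz : ∀ v, H.Adj z v → v = y ∨ v = w :=
        fun v hv => hdeg z y w v hyz.symm hzw (Ne.symm hwy) hv
      have hclosed : ∀ u ∈ ({x, y, z, w} : Set β), ∀ v, H.Adj u v → v ∈ ({x, y, z, w} : Set β) := by
        intro u hu v huv
        simp only [Set.mem_insert_iff, Set.mem_singleton_iff] at hu ⊢
        rcases hu with rfl | rfl | rfl | rfl
        · exact Or.inr (Or.inl (hx' v huv))
        · rcases hy v huv with rfl | rfl
          · exact Or.inl rfl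
          · exact Or.inr (Or.inr (Or.inl rfl))
        · rcases hz v huv with rfl | rfl
          · exact Or.inr (Or.inl rfl)
          · exact Or.inr (Or.inr (Or.inr rfl))
        · exact Or.inr (Or.inr (Or.inl (hw v huv)))
      have hall : ∀ t : β, t = x ∨ t = y ∨ t = z ∨ t = w := by
        intro t
        obtain ⟨wlk⟩ := hH.preconnected x t
        have := walk_closure hclosed wlk (by simp)
        simpa using this
      have hcard4 := card_le_four x y z w hall
      refine notWD_of_pair H y z x w hyx hzw ?_ ?_ ?_ (by omega)
      · rw [mem_closedNbhd_iff]
        push_neg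
        exact ⟨hxz, fun h => hxz2 h.symm⟩
      · rw [mem_closedNbhd_iff]
        push_neg
        exact ⟨hwy, hnyw⟩
      · intro v
        rcases hall v with rfl | rfl | rfl | rfl
        · exact Or.inl (by rw [mem_closedNbhd_iff]; exact Or.inr hyx)
        · exact Or.inl (by rw [mem_closedNbhd_iff]; exact Or.inl rfl)
        · exact Or.inr (by rw [mem_closedNbhd_iff]; exact Or.inl rfl)
        · exact Or.inr (by rw [mem_closedNbhd_iff]; exact Or.inr hzw)
    · exfalso
      push_neg at hzw
      have hz' : ∀ v, H.Adj z v → v = y := fun v hv => by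
        by_contra hvy
        exact hvy (hzw v hv)
      have hclosed : ∀ u ∈ ({x, y, z} : Set β), ∀ v, H.Adj u v → v ∈ ({x, y, z} : Set β) := by
        intro u hu v huv
        simp only [Set.mem_insert_iff, Set.mem_singleton_iff] at hu ⊢
        rcases hu with rfl | rfl | rfl
        · exact Or.inr (Or.inl (hx' v huv))
        · rcases hy v huv with rfl | rfl
          · exact Or.inl rfl
          · exact Or.inr (Or.inr rfl)
        · exact Or.inr (Or.inl (hz' v huv))
      have hall : ∀ t : β, t = x ∨ t = y ∨ t = z := by
        intro t
        obtain ⟨wlk⟩ := hH.preconnected x t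
        have := walk_closure hclosed wlk (by simp)
        simpa using this
      have := card_le_three x y z hall
      omega



end Stmt18Aux

/-- If `H` is connected of order at least `4`, then `K₃ □ H` is not well-dominated. -/
theorem stmt_18 {β : Type*} [Fintype β] (H : SimpleGraph β)
    (hH : H.Connected) (hβ : 4 ≤ Fintype.card β) :
    ¬ WellDominated ((⊤ : SimpleGraph (Fin 3)) □ H) := by
  classical
  by_cases hC1 : ∃ b t₁ t₂ t₃ : β, H.Adj b t₁ ∧ H.Adj b t₂ ∧ H.Adj b t₃ ∧
      t₁ ≠ t₂ ∧ t₁ ≠ t₃ ∧ t₂ ≠ t₃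
  · obtain ⟨b, t1, t2, t3, h1, h2, h3, h12, h13, h23⟩ := hC1
    exact Stmt18Aux.notWD_of_C1 H hβ b t1 t2 t3 h1 h2 h3 h12 h13 h23
  by_cases hC2 : ∃ a b c : β, H.Adj b a ∧ H.Adj b c ∧ a ≠ c ∧
      (∃ a', H.Adj a a' ∧ a' ≠ b ∧ a' ≠ c) ∧ (∃ c', H.Adj c c' ∧ c' ≠ a ∧ c' ≠ b)
  · obtain ⟨a, b, c, hba, hbc, hac, ⟨a', ha', ha'b, ha'c⟩, ⟨c', hc', hc'a, hc'b⟩⟩ := hC2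
    exact Stmt18Aux.notWD_of_C2 H hβ a b c a' c' hba hbc hac ha' ha'b ha'c hc' hc'a hc'b
  push_neg at hC1 hC2
  have hdeg : ∀ b p q r, H.Adj b p → H.Adj b q → p ≠ q → H.Adj b r → r = p ∨ r = q := by
    intro b p q r hp hq hpq hr
    by_cases hrp : r = p
    · exact Or.inl hrp
    · exact Or.inr (hC1 b p q r hp hq hr hpq (fun h => hrp h.symm)).symm
  have hC2' : ∀ a b c, H.Adj b a → H.Adj b c → a ≠ c →
      (∃ a', H.Adj a a' ∧ a' ≠ b ∧ a' ≠ c) → ∀ c', H.Adj c c' → c' ≠ a → c' = b := by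
    intro a b c hba hbc hac hout c' hcc' hc'a
    exact hC2 a b c hba hbc hac hout c' hcc' hc'a
  -- find an edge
  have hedge : ∃ u v : β, H.Adj u v := by
    obtain ⟨u, v, hne⟩ := Fintype.exists_pair_of_one_lt_card (α := β) (by omega)
    obtain ⟨w⟩ := hH.preconnected u v
    cases w with
    | nil => exact absurd rfl hne
    | cons h _ => exact ⟨_, _, h⟩
  obtain ⟨u, v, huv⟩ := hedge
  -- find a vertex with two distinct neighbors
  have hdeg2 : ∃ y p q, H.Adj y p ∧ H.Adj y q ∧ p ≠ q := by
    by_contra hno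
    push_neg at hno
    have hclosed : ∀ s ∈ ({u, v} : Set β), ∀ t, H.Adj s t → t ∈ ({u, v} : Set β) := by
      intro s hs t hst
      simp only [Set.mem_insert_iff, Set.mem_singleton_iff] at hs ⊢
      rcases hs with rfl | rfl
      · exact Or.inr (hno s v t huv hst).symm
      · exact Or.inl (hno s u t huv.symm hst).symm
    have hall : ∀ t : β, t = u ∨ t = v := by
      intro t
      obtain ⟨wlk⟩ := hH.preconnected u t
      have := Stmt18Aux.walk_closure hclosed wlk (by simp)
      simpa using this
    have := Stmt18Aux.card_le_three u v v (fun t => by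
      rcases hall t with rfl | rfl
      · exact Or.inl rfl
      · exact Or.inr (Or.inl rfl))
    omega
  obtain ⟨y, p, q, hyp, hyq, hpq⟩ := hdeg2
  by_cases hpout : ∃ a', H.Adj p a' ∧ a' ≠ y ∧ a' ≠ q
  · -- q's neighbors restricted to {p, y}
    have hq : ∀ v', H.Adj q v' → v' = y ∨ v' = p := by
      intro v' hv'
      by_cases h : v' = p
      · exact Or.inr h
      · exact Or.inl (hC2' p y q hyp hyq hpq hpout v' hv' h)
    exact Stmt18Aux.aux3 H hH hβ hdeg hC2' q y p hyq hyp (Ne.symm hpq) hq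
  · push_neg at hpout
    have hp : ∀ v', H.Adj p v' → v' = y ∨ v' = q := by
      intro v' hv'
      by_cases h : v' = y
      · exact Or.inl h
      · exact Or.inr (hpout v' hv' h)
    exact Stmt18Aux.aux3 H hH hβ hdeg hC2' p y q hyp hyq hpq hp
end
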